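/- arXiv:1905.05017 — 3 statements merged into one kernel-verified Lean document; each statement's English description precedes it below -/
import Mathlib

section
/- For all t ≥ 1 and all i ∈ ℤ, the spin at site i after t steps of the Kac dynamics satisfies 2·(φ^t(x,y))₁(i) − 1 = (1−2y(i−1))·(1−2y(i−2))⋯(1−2y(i−t))·(2x(i−t)−1). -/
/-- The Kac chain dynamics. -/
def kacPhi (p : (ℤ → ℤ) × (ℤ → ℤ)) : (ℤ → ℤ) × (ℤ → ℤ) :=
  (fun i => p.1 (i - 1) + p.2 (i - 1) - 2 * p.1 (i - 1) * p.2 (i - 1), p.2)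

lemma kacPhi_snd (p : (ℤ → ℤ) × (ℤ → ℤ)) (t : ℕ) : (kacPhi^[t] p).2 = p.2 := by
  induction t with
  | zero => rfl
  | succ n ih => rw [Function.iterate_succ_apply', kacPhi]; exact ih

/-- for all `t ≥ 1` and all sites `i`, the spin at site `i` after `t` steps
satisfies `2·(φ^t(x,y))₁(i) − 1 = ∏_{k=1}^{t} (1−2y(i−k)) · (2x(i−t)−1)`. -/
theorem kacPhi_spin_formula (x y : ℤ → ℤ) (t : ℕ) (ht : 1 ≤ t) (i : ℤ) :
    2 * (kacPhi^[t] (x, y)).1 i - 1 =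
      (∏ k ∈ Finset.Icc 1 t, (1 - 2 * y (i - (k : ℤ)))) * (2 * x (i - (t : ℤ)) - 1) := by
  induction t generalizing i with
  | zero => omega
  | succ n ih =>
    rcases Nat.eq_zero_or_pos n with hn | hn
    · subst hn
      rw [Function.iterate_one]
      simp only [kacPhi, Finset.Icc_self, Finset.prod_singleton]
      push_cast
      ring
    · rw [Function.iterate_succ_apply']
      have hsnd : (kacPhi^[n] (x, y)).2 = y := kacPhi_snd _ _
      simp only [kacPhi, hsnd]
      have key := ih hn (i - 1)
      have hprod : (∏ k ∈ Finset.Icc 1 (n + 1), (1 - 2 * y (i - (k : ℤ)))) =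
          (1 - 2 * y (i - 1)) * ∏ k ∈ Finset.Icc 1 n, (1 - 2 * y (i - 1 - (k : ℤ))) := by
        rw [← Finset.Ico_add_one_right_eq_Icc, ← Finset.Ico_add_one_right_eq_Icc,
          Finset.prod_Ico_eq_prod_range, Finset.prod_Ico_eq_prod_range]
        simp only [Nat.add_sub_cancel, Nat.succ_sub_one]
        rw [Finset.prod_range_succ']
        rw [mul_comm]
        congr 1
        · apply Finset.prod_congr rfl
          intro k _
          congr 1
          push_cast
          ring
      rw [hprod]
      have hloc : (i : ℤ) - 1 - (n : ℤ) = i - ((n : ℤ) + 1) := by ring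
      push_cast
      rw [← hloc]
      linear_combination (1 - 2 * y (i - 1)) * key
end

section
/- Under the product Bernoulli measure μ_m with spin mean m₀ and scatterer density m₁, for all t with 0 ≤ t ≤ T and T ≤ 2N, the variance of the block-averaged magnetization at time t satisfies Var[m₀^N ∘ φ^t] ≤ (1 + 2m₀²t)/(2N+1). -/
open MeasureTheory ProbabilityTheory

/-- Block-averaged magnetization over the `2N+1` sites centered at the origin. -/
noncomputable def m0Avg (N : ℕ) (p : (ℤ → ℤ) × (ℤ → ℤ)) : ℝ :=
  (∑ i ∈ Finset.Icc (-(N : ℤ)) (N : ℤ), (2 * (p.1 i : ℝ) - 1)) / (2 * (N : ℝ) + 1)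

/-- The family of all coordinate functions (spins and scatterers). -/
def coordFun : ℤ ⊕ ℤ → ((ℤ → ℤ) × (ℤ → ℤ)) → ℤ :=
  Sum.elim (fun i p => p.1 i) (fun i p => p.2 i)

/-! ### Auxiliary definitions -/

abbrev KacSp : Type := (ℤ → ℤ) × (ℤ → ℤ)

noncomputable def kacS (i : ℤ) (p : KacSp) : ℝ := 2 * (p.1 i : ℝ) - 1
noncomputable def kacW (j : ℤ) (p : KacSp) : ℝ := 1 - 2 * (p.2 j : ℝ)
noncomputable def kacSigma (t : ℕ) (i : ℤ) (p : KacSp) : ℝ :=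
  kacS (i - (t : ℤ)) p * ∏ j ∈ Finset.Ico (i - (t : ℤ)) i, kacW j p

lemma kacPhi_iterate_snd (t : ℕ) (p : KacSp) : (kacPhi^[t] p).2 = p.2 := by
  induction t with
  | zero => rfl
  | succ n ih => rw [Function.iterate_succ_apply']; exact ih

lemma kacPhi_iterate_fst (t : ℕ) (p : KacSp) : ∀ i : ℤ,
    2 * (kacPhi^[t] p).1 i - 1
      = (2 * p.1 (i - (t : ℤ)) - 1) * ∏ j ∈ Finset.Ico (i - (t : ℤ)) i, (1 - 2 * p.2 j) := by
  induction t with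
  | zero => intro i; simp
  | succ n ih =>
    intro i
    rw [Function.iterate_succ_apply']
    have h1 : 2 * (kacPhi (kacPhi^[n] p)).1 i - 1
        = (2 * (kacPhi^[n] p).1 (i - 1) - 1) * (1 - 2 * (kacPhi^[n] p).2 (i - 1)) := by
      show 2 * ((kacPhi^[n] p).1 (i-1) + (kacPhi^[n] p).2 (i-1)
        - 2 * (kacPhi^[n] p).1 (i-1) * (kacPhi^[n] p).2 (i-1)) - 1 = _
      ring
    rw [h1, kacPhi_iterate_snd, ih (i - 1)]
    have harg : i - ((n + 1 : ℕ) : ℤ) = i - 1 - (n : ℤ) := by push_cast; ring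
    rw [harg]
    have key : Finset.Ico (i - 1 - (n : ℤ)) i
        = insert (i - 1) (Finset.Ico (i - 1 - (n : ℤ)) (i - 1)) := by
      ext j
      simp only [Finset.mem_Ico, Finset.mem_insert]
      omega
    rw [key, Finset.prod_insert (by simp [Finset.mem_Ico])]
    ring

lemma meas_eval_fst (i : ℤ) : Measurable fun p : KacSp => p.1 i :=
  (measurable_pi_apply i).comp measurable_fst

lemma meas_eval_snd (j : ℤ) : Measurable fun p : KacSp => p.2 j :=
  (measurable_pi_apply j).comp measurable_snd

lemma meas_kacS (i : ℤ) : Measurable (kacS i) :=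
  (measurable_of_countable (fun z : ℤ => 2 * (z : ℝ) - 1)).comp (meas_eval_fst i)

lemma meas_kacW (j : ℤ) : Measurable (kacW j) :=
  (measurable_of_countable (fun z : ℤ => 1 - 2 * (z : ℝ))).comp (meas_eval_snd j)

lemma meas_kacSigma (t : ℕ) (i : ℤ) : Measurable (kacSigma t i) :=
  (meas_kacS _).mul (Finset.measurable_prod _ fun j _ => meas_kacW j)

/-- Generic: expectation of a finite product of independent real random variables. -/
lemma integral_prod_of_indep {μ : Measure KacSp} [IsProbabilityMeasure μ]
    {κ : Type*} {f : κ → KacSp → ℝ}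
    (hf : iIndepFun f μ)
    (hmeas : ∀ k, Measurable (f k)) (U : Finset κ) :
    ∫ p, ∏ k ∈ U, f k p ∂μ = ∏ k ∈ U, ∫ p, f k p ∂μ := by
  classical
  induction U using Finset.cons_induction with
  | empty => simp
  | cons a s ha ih =>
    have hip : IndepFun (∏ j ∈ s, f j) (f a) μ :=
      hf.indepFun_finsetProd_of_notMem hmeas ha
    have hX : AEStronglyMeasurable (∏ j ∈ s, f j) μ := by
      rw [Finset.prod_fn]
      exact (Finset.measurable_prod s fun j _ => hmeas j).aestronglyMeasurable
    have h := hip.integral_mul_eq_mul_integral hX ((hmeas a).aestronglyMeasurable)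
    have e1 : (fun p => ∏ k ∈ Finset.cons a s ha, f k p)
        = ((∏ j ∈ s, f j) * f a) := by
      funext p
      simp [Finset.prod_insert ha, Finset.prod_apply, mul_comm]
    rw [show (∫ p, ∏ k ∈ Finset.cons a s ha, f k p ∂μ)
        = integral μ ((∏ j ∈ s, f j) * f a) from by rw [← e1],
      h, Finset.prod_cons]
    rw [show integral μ (∏ j ∈ s, f j) = ∫ p, ∏ k ∈ s, f k p ∂μ from by
      congr 1; funext p; rw [Finset.prod_apply], ih]
    ring

/-- a.e. all coordinates are 0 or 1. -/
lemma ae_binary {m₀ m₁ : ℝ} {μ : Measure KacSp} [IsProbabilityMeasure μ]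
    (hx1 : ∀ i : ℤ, μ {p | p.1 i = 1} = ENNReal.ofReal ((1 + m₀) / 2))
    (hx0 : ∀ i : ℤ, μ {p | p.1 i = 0} = ENNReal.ofReal ((1 - m₀) / 2))
    (hy1 : ∀ i : ℤ, μ {p | p.2 i = 1} = ENNReal.ofReal m₁)
    (hy0 : ∀ i : ℤ, μ {p | p.2 i = 0} = ENNReal.ofReal (1 - m₁))
    (hm₀ : m₀ ∈ Set.Icc (-1 : ℝ) 1) (hm₁ : m₁ ∈ Set.Icc (0 : ℝ) 1) :
    ∀ᵐ p ∂μ, (∀ i : ℤ, p.1 i = 0 ∨ p.1 i = 1) ∧ (∀ j : ℤ, p.2 j = 0 ∨ p.2 j = 1) := by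
  rw [Filter.eventually_and]
  constructor <;> rw [ae_all_iff] <;> intro i
  · have hA : MeasurableSet {p : KacSp | p.1 i = 0} :=
      (meas_eval_fst i) (measurableSet_singleton 0)
    have hB : MeasurableSet {p : KacSp | p.1 i = 1} :=
      (meas_eval_fst i) (measurableSet_singleton 1)
    have hd : Disjoint {p : KacSp | p.1 i = 0} {p : KacSp | p.1 i = 1} := by
      rw [Set.disjoint_left]; rintro p h0 h1; simp only [Set.mem_setOf_eq] at h0 h1; omega
    have hU : μ ({p : KacSp | p.1 i = 0} ∪ {p | p.1 i = 1}) = 1 := by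
      rw [measure_union hd hB, hx0, hx1, ← ENNReal.ofReal_add (by linarith [hm₀.2])
        (by linarith [hm₀.1])]
      rw [show (1 - m₀) / 2 + (1 + m₀) / 2 = 1 by ring, ENNReal.ofReal_one]
    have := (prob_compl_eq_zero_iff (hA.union hB)).mpr hU
    rw [MeasureTheory.ae_iff]
    convert this using 2
    ext p; simp
  · have hA : MeasurableSet {p : KacSp | p.2 i = 0} :=
      (meas_eval_snd i) (measurableSet_singleton 0)
    have hB : MeasurableSet {p : KacSp | p.2 i = 1} :=
      (meas_eval_snd i) (measurableSet_singleton 1)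
    have hd : Disjoint {p : KacSp | p.2 i = 0} {p : KacSp | p.2 i = 1} := by
      rw [Set.disjoint_left]; rintro p h0 h1; simp only [Set.mem_setOf_eq] at h0 h1; omega
    have hU : μ ({p : KacSp | p.2 i = 0} ∪ {p | p.2 i = 1}) = 1 := by
      rw [measure_union hd hB, hy0, hy1, ← ENNReal.ofReal_add (by linarith [hm₁.2])
        (by linarith [hm₁.1])]
      rw [show (1 - m₁) + m₁ = 1 by ring, ENNReal.ofReal_one]
    have := (prob_compl_eq_zero_iff (hA.union hB)).mpr hU
    rw [MeasureTheory.ae_iff]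
    convert this using 2
    ext p; simp

/-- Expectation of a function of a binary coordinate. -/
lemma integral_of_binary {μ : Measure KacSp} [IsProbabilityMeasure μ]
    {f : KacSp → ℤ} (hf : Measurable f) (g : ℤ → ℝ)
    (hbin : ∀ᵐ p ∂μ, f p = 0 ∨ f p = 1) :
    ∫ p, g (f p) ∂μ
      = g 1 * (μ {p | f p = 1}).toReal + g 0 * (μ {p | f p = 0}).toReal := by
  have h1 : MeasurableSet {p : KacSp | f p = 1} := hf (measurableSet_singleton 1)
  have h0 : MeasurableSet {p : KacSp | f p = 0} := hf (measurableSet_singleton 0)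
  have hae : (fun p => g (f p)) =ᵐ[μ]
      fun p => Set.indicator {p | f p = 1} (fun _ => g 1) p
        + Set.indicator {p | f p = 0} (fun _ => g 0) p := by
    filter_upwards [hbin] with p hp
    rcases hp with h | h <;>
      simp [Set.indicator_apply, Set.mem_setOf_eq, h]
  rw [integral_congr_ae hae, integral_add
      ((integrable_const (g 1)).indicator h1) ((integrable_const (g 0)).indicator h0),
    integral_indicator_const _ h1, integral_indicator_const _ h0]
  simp [mul_comm]
  rfl

section Expectations

variable {m₀ m₁ : ℝ} {μ : Measure KacSp} [IsProbabilityMeasure μ]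

lemma integral_kacS
    (hx1 : ∀ i : ℤ, μ {p | p.1 i = 1} = ENNReal.ofReal ((1 + m₀) / 2))
    (hx0 : ∀ i : ℤ, μ {p | p.1 i = 0} = ENNReal.ofReal ((1 - m₀) / 2))
    (hm₀ : m₀ ∈ Set.Icc (-1 : ℝ) 1)
    (hbin : ∀ᵐ p ∂μ, (∀ i : ℤ, p.1 i = 0 ∨ p.1 i = 1) ∧ (∀ j : ℤ, p.2 j = 0 ∨ p.2 j = 1))
    (i : ℤ) : ∫ p, kacS i p ∂μ = m₀ := by
  have h := integral_of_binary (μ := μ) (meas_eval_fst i) (fun z : ℤ => 2 * (z : ℝ) - 1)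
    (by filter_upwards [hbin] with p hp using hp.1 i)
  rw [show (∫ p, kacS i p ∂μ) = ∫ p, (fun z : ℤ => 2 * (z : ℝ) - 1) (p.1 i) ∂μ from rfl, h,
    hx1 i, hx0 i, ENNReal.toReal_ofReal (by linarith [hm₀.1]),
    ENNReal.toReal_ofReal (by linarith [hm₀.2])]
  push_cast
  ring

lemma integral_kacW
    (hy1 : ∀ i : ℤ, μ {p | p.2 i = 1} = ENNReal.ofReal m₁)
    (hy0 : ∀ i : ℤ, μ {p | p.2 i = 0} = ENNReal.ofReal (1 - m₁))
    (hm₁ : m₁ ∈ Set.Icc (0 : ℝ) 1)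
    (hbin : ∀ᵐ p ∂μ, (∀ i : ℤ, p.1 i = 0 ∨ p.1 i = 1) ∧ (∀ j : ℤ, p.2 j = 0 ∨ p.2 j = 1))
    (j : ℤ) : ∫ p, kacW j p ∂μ = 1 - 2 * m₁ := by
  have h := integral_of_binary (μ := μ) (meas_eval_snd j) (fun z : ℤ => 1 - 2 * (z : ℝ))
    (by filter_upwards [hbin] with p hp using hp.2 j)
  rw [show (∫ p, kacW j p ∂μ) = ∫ p, (fun z : ℤ => 1 - 2 * (z : ℝ)) (p.2 j) ∂μ from rfl, h,
    hy1 j, hy0 j, ENNReal.toReal_ofReal hm₁.1, ENNReal.toReal_ofReal (by linarith [hm₁.2])]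
  push_cast
  ring

/-- Expectation of a product of distinct spins and scatterer factors. -/
lemma integral_SW
    (hind : iIndepFun coordFun μ)
    (hx1 : ∀ i : ℤ, μ {p | p.1 i = 1} = ENNReal.ofReal ((1 + m₀) / 2))
    (hx0 : ∀ i : ℤ, μ {p | p.1 i = 0} = ENNReal.ofReal ((1 - m₀) / 2))
    (hy1 : ∀ i : ℤ, μ {p | p.2 i = 1} = ENNReal.ofReal m₁)
    (hy0 : ∀ i : ℤ, μ {p | p.2 i = 0} = ENNReal.ofReal (1 - m₁))
    (hm₀ : m₀ ∈ Set.Icc (-1 : ℝ) 1) (hm₁ : m₁ ∈ Set.Icc (0 : ℝ) 1)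
    (S T : Finset ℤ) :
    ∫ p, (∏ i ∈ S, kacS i p) * ∏ j ∈ T, kacW j p ∂μ
      = m₀ ^ S.card * (1 - 2 * m₁) ^ T.card := by
  have hbin := ae_binary hx1 hx0 hy1 hy0 hm₀ hm₁
  have hcomp : iIndepFun
      (Sum.elim (fun i => kacS i) (fun j => kacW j)) μ := by
    have h := hind.comp (γ := fun _ => ℝ) (mγ := fun _ => inferInstance)
      (Sum.elim (fun _ (z : ℤ) => 2 * (z : ℝ) - 1) (fun _ (z : ℤ) => 1 - 2 * (z : ℝ)))
      (fun k => by cases k <;> exact measurable_of_countable _)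
    have he : (fun k => Sum.elim (fun _ (z : ℤ) => 2 * (z : ℝ) - 1)
        (fun _ (z : ℤ) => 1 - 2 * (z : ℝ)) k ∘ coordFun k)
        = Sum.elim (fun i => kacS i) (fun j => kacW j) := by
      funext k; cases k <;> rfl
    rwa [he] at h
  have hmeas : ∀ k : ℤ ⊕ ℤ, Measurable (Sum.elim (fun i => kacS i) (fun j => kacW j) k) :=
    fun k => by cases k with
      | inl i => exact meas_kacS i
      | inr j => exact meas_kacW j
  have h := integral_prod_of_indep hcomp hmeas (S.disjSum T)
  rw [show (∫ p, (∏ i ∈ S, kacS i p) * ∏ j ∈ T, kacW j p ∂μ)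
      = ∫ p, ∏ k ∈ S.disjSum T, Sum.elim (fun i => kacS i) (fun j => kacW j) k p ∂μ from by
    congr 1; funext p
    rw [← Finset.prod_sumElim S T (fun i => kacS i p) (fun j => kacW j p)]
    apply Finset.prod_congr rfl
    intro k _; cases k <;> rfl, h]
  rw [show (∏ k ∈ S.disjSum T, ∫ p, Sum.elim (fun i => kacS i) (fun j => kacW j) k p ∂μ)
      = (∏ i ∈ S, ∫ p, kacS i p ∂μ) * ∏ j ∈ T, ∫ p, kacW j p ∂μ from by
    rw [← Finset.prod_sumElim S T]
    apply Finset.prod_congr rfl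
    intro k _; cases k <;> rfl]
  rw [Finset.prod_congr rfl fun i _ => integral_kacS hx1 hx0 hm₀ hbin i,
    Finset.prod_congr rfl fun j _ => integral_kacW hy1 hy0 hm₁ hbin j,
    Finset.prod_const, Finset.prod_const]

end Expectations

/-- under the i.i.d. product Bernoulli measure with spin mean `m₀` and
scatterer density `m₁`, for `0 ≤ t ≤ T` and `T ≤ 2N`, the variance of the block-averaged
magnetization at time `t` is at most `(1 + 2m₀²t)/(2N+1)`. -/
theorem variance_magnetization_bound (m₀ m₁ : ℝ) (hm₀ : m₀ ∈ Set.Icc (-1 : ℝ) 1)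
    (hm₁ : m₁ ∈ Set.Icc (0 : ℝ) 1)
    (μ : Measure ((ℤ → ℤ) × (ℤ → ℤ))) [IsProbabilityMeasure μ]
    (hind : iIndepFun coordFun μ)
    (hx1 : ∀ i : ℤ, μ {p | p.1 i = 1} = ENNReal.ofReal ((1 + m₀) / 2))
    (hx0 : ∀ i : ℤ, μ {p | p.1 i = 0} = ENNReal.ofReal ((1 - m₀) / 2))
    (hy1 : ∀ i : ℤ, μ {p | p.2 i = 1} = ENNReal.ofReal m₁)
    (hy0 : ∀ i : ℤ, μ {p | p.2 i = 0} = ENNReal.ofReal (1 - m₁))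
    (T t N : ℕ) (htT : t ≤ T) (hTN : T ≤ 2 * N) :
    variance (fun p => m0Avg N (kacPhi^[t] p)) μ ≤ (1 + 2 * m₀ ^ 2 * t) / (2 * (N : ℝ) + 1) := by
  classical
  have hbin := ae_binary hx1 hx0 hy1 hy0 hm₀ hm₁
  have hSW := fun S T => integral_SW hind hx1 hx0 hy1 hy0 hm₀ hm₁ S T
  set r : ℝ := 1 - 2 * m₁ with hr_def
  set I : Finset ℤ := Finset.Icc (-(N : ℤ)) (N : ℤ) with hI_def
  have hr2_0 : (0:ℝ) ≤ r ^ 2 := sq_nonneg r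
  have hr2_1 : r ^ 2 ≤ 1 := by
    rw [hr_def]; nlinarith [hm₁.1, hm₁.2]
  -- boundedness and integrability
  have hboundσ : ∀ i : ℤ, ∀ᵐ p ∂μ, ‖kacSigma t i p‖ ≤ 1 := by
    intro i
    filter_upwards [hbin] with p hp
    have h1 : |kacS (i - (t:ℤ)) p| = 1 := by
      rcases hp.1 (i - (t:ℤ)) with h | h <;> norm_num [kacS, h]
    have h2 : ∀ j, |kacW j p| = 1 := fun j => by
      rcases hp.2 j with h | h <;> norm_num [kacW, h]
    rw [Real.norm_eq_abs, kacSigma, abs_mul, h1, one_mul, Finset.abs_prod]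
    exact le_of_eq (Finset.prod_eq_one fun j _ => h2 j)
  have hmem : ∀ i : ℤ, MemLp (kacSigma t i) 2 μ := fun i =>
    MemLp.of_bound (meas_kacSigma t i).aestronglyMeasurable 1 (hboundσ i)
  have hint1 : ∀ i : ℤ, Integrable (kacSigma t i) μ := fun i => (hmem i).integrable one_le_two
  have hint2 : ∀ i j : ℤ, Integrable (fun p => kacSigma t i p * kacSigma t j p) μ := by
    intro i j
    refine memLp_one_iff_integrable.mp (MemLp.of_bound
      (((meas_kacSigma t i).mul (meas_kacSigma t j)).aestronglyMeasurable) 1 ?_)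
    filter_upwards [hboundσ i, hboundσ j] with p h1 h2
    rw [norm_mul]
    exact (mul_le_mul h1 h2 (norm_nonneg _) zero_le_one).trans_eq (one_mul 1)
  -- first and second moments
  have hcard_Ico : ∀ i : ℤ, (Finset.Ico (i - (t:ℤ)) i).card = t := by
    intro i; rw [Int.card_Ico]; omega
  have hEσ : ∀ i : ℤ, ∫ p, kacSigma t i p ∂μ = m₀ * r ^ t := by
    intro i
    have h := hSW {i - (t:ℤ)} (Finset.Ico (i - (t:ℤ)) i)
    rw [Finset.card_singleton, hcard_Ico i, pow_one] at h
    rw [← h]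
    congr 1; funext p
    rw [kacSigma, Finset.prod_singleton]
  have hEσ2 : ∀ i : ℤ, ∫ p, kacSigma t i p * kacSigma t i p ∂μ = 1 := by
    intro i
    have hae : (fun p => kacSigma t i p * kacSigma t i p) =ᵐ[μ] fun _ => (1:ℝ) := by
      filter_upwards [hbin] with p hp
      have h1 : kacS (i - (t:ℤ)) p * kacS (i - (t:ℤ)) p = 1 := by
        rcases hp.1 (i - (t:ℤ)) with h | h <;> norm_num [kacS, h]
      have h2 : ∀ j, kacW j p * kacW j p = 1 := fun j => by
        rcases hp.2 j with h | h <;> norm_num [kacW, h]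
      show kacSigma t i p * kacSigma t i p = 1
      rw [kacSigma, mul_mul_mul_comm, h1, one_mul, ← Finset.prod_mul_distrib]
      exact Finset.prod_eq_one fun j _ => h2 j
    rw [integral_congr_ae hae]
    simp
  have hEσσ : ∀ i j : ℤ, i ≠ j →
      ∫ p, kacSigma t i p * kacSigma t j p ∂μ
        = m₀ ^ 2 * (r ^ 2) ^ (t - (Finset.Ico (i - (t:ℤ)) i ∩ Finset.Ico (j - (t:ℤ)) j).card) := by
    intro i j hij
    set A := Finset.Ico (i - (t:ℤ)) i with hA
    set B := Finset.Ico (j - (t:ℤ)) j with hB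
    set D := (A ∪ B) \ (A ∩ B) with hD
    have hsub : A ∩ B ⊆ A ∪ B := Finset.inter_subset_left.trans Finset.subset_union_left
    have hne : i - (t:ℤ) ≠ j - (t:ℤ) := by omega
    have hae : (fun p => kacSigma t i p * kacSigma t j p) =ᵐ[μ]
        fun p => (∏ k ∈ ({i - (t:ℤ), j - (t:ℤ)} : Finset ℤ), kacS k p)
          * ∏ l ∈ D, kacW l p := by
      filter_upwards [hbin] with p hp
      have h2 : ∀ l, kacW l p * kacW l p = 1 := fun l => by
        rcases hp.2 l with h | h <;> norm_num [kacW, h]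
      show kacSigma t i p * kacSigma t j p = _
      rw [Finset.prod_pair hne, kacSigma, kacSigma, mul_mul_mul_comm]
      congr 1
      have e1 : (∏ l ∈ A, kacW l p) * ∏ l ∈ B, kacW l p
          = (∏ l ∈ A ∪ B, kacW l p) * ∏ l ∈ A ∩ B, kacW l p :=
        Finset.prod_union_inter.symm
      rw [e1, ← Finset.prod_sdiff hsub, mul_assoc, ← Finset.prod_mul_distrib,
        Finset.prod_congr rfl (fun l _ => h2 l), Finset.prod_const_one, mul_one]
    rw [integral_congr_ae hae, hSW _ _, Finset.card_pair hne]
    have hdA : A.card = t := hcard_Ico i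
    have hd_le : (A ∩ B).card ≤ t := hdA ▸ Finset.card_le_card Finset.inter_subset_left
    have hDcard : D.card = 2 * (t - (A ∩ B).card) := by
      have h1 := Finset.card_union_add_card_inter A B
      have h2 : D.card = (A ∪ B).card - (A ∩ B).card := Finset.card_sdiff_of_subset hsub
      have hdB : B.card = t := hcard_Ico j
      omega
    rw [hDcard, pow_mul]
  -- far pairs have empty overlap
  have hfar : ∀ i j : ℤ, (t:ℤ) ≤ |j - i| →
      (Finset.Ico (i - (t:ℤ)) i ∩ Finset.Ico (j - (t:ℤ)) j) = ∅ := by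
    intro i j h
    rw [Finset.Ico_inter_Ico]
    apply Finset.Ico_eq_empty
    rw [not_lt]
    rcases le_total i j with hle | hle
    · rw [abs_of_nonneg (by omega)] at h
      exact le_trans inf_le_left (le_trans (by omega) le_sup_right)
    · rw [abs_of_nonpos (by omega)] at h
      exact le_trans inf_le_right (le_trans (by omega) le_sup_left)
  -- covariances
  set c : ℤ → ℤ → ℝ := fun i j => (∫ p, kacSigma t i p * kacSigma t j p ∂μ)
    - (∫ p, kacSigma t i p ∂μ) * (∫ p, kacSigma t j p ∂μ) with hc
  have hEprod : ∀ i j : ℤ, (∫ p, kacSigma t i p ∂μ) * (∫ p, kacSigma t j p ∂μ)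
      = m₀ ^ 2 * (r ^ 2) ^ t := by
    intro i j
    rw [hEσ i, hEσ j, mul_mul_mul_comm, ← sq, ← pow_add, ← two_mul, pow_mul]
  have hcov_diag : ∀ i : ℤ, c i i ≤ 1 := by
    intro i
    simp only [hc]
    rw [hEσ2 i, hEprod i i]
    have : (0:ℝ) ≤ m₀ ^ 2 * (r ^ 2) ^ t := by positivity
    linarith
  have hcov_off : ∀ i j : ℤ, i ≠ j → c i j ≤ m₀ ^ 2 := by
    intro i j hij
    simp only [hc]
    rw [hEσσ i j hij, hEprod i j]
    have h1 : (r ^ 2) ^ (t - (Finset.Ico (i - (t:ℤ)) i ∩ Finset.Ico (j - (t:ℤ)) j).card) ≤ 1 :=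
      pow_le_one₀ hr2_0 hr2_1
    have h2 : (0:ℝ) ≤ (r ^ 2) ^ t := pow_nonneg hr2_0 t
    nlinarith [sq_nonneg m₀, mul_le_mul_of_nonneg_left h1 (sq_nonneg m₀),
      mul_nonneg (sq_nonneg m₀) h2]
  have hcov_far : ∀ i j : ℤ, i ≠ j → (t:ℤ) ≤ |j - i| → c i j = 0 := by
    intro i j hij h
    simp only [hc]
    rw [hEσσ i j hij, hEprod i j, hfar i j h]
    simp
  -- variance decomposition
  set Sf : KacSp → ℝ := fun p => ∑ i ∈ I, kacSigma t i p with hSf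
  have hmemS : MemLp Sf 2 μ := by
    have h := memLp_finsetSum' I (fun i (_ : i ∈ I) => hmem i)
    have e : (∑ i ∈ I, kacSigma t i) = Sf := by
      funext p; rw [Finset.sum_apply]
    rwa [e] at h
  have hvar : variance Sf μ = ∑ i ∈ I, ∑ j ∈ I, c i j := by
    rw [variance_eq_sub hmemS]
    have h1 : μ[Sf ^ 2] = ∑ i ∈ I, ∑ j ∈ I, ∫ p, kacSigma t i p * kacSigma t j p ∂μ := by
      have e : (Sf ^ 2) = fun p => ∑ i ∈ I, ∑ j ∈ I, kacSigma t i p * kacSigma t j p := by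
        funext p
        rw [Pi.pow_apply, sq, hSf]
        exact Finset.sum_mul_sum I I _ _
      rw [e, integral_finset_sum I (fun i _ => integrable_finset_sum I (fun j _ => hint2 i j))]
      exact Finset.sum_congr rfl fun i _ => integral_finset_sum I fun j _ => hint2 i j
    have h2 : μ[Sf] = ∑ i ∈ I, ∫ p, kacSigma t i p ∂μ :=
      integral_finset_sum I fun i _ => hint1 i
    rw [h1, h2, sq, Finset.sum_mul_sum, ← Finset.sum_sub_distrib]
    refine Finset.sum_congr rfl fun i _ => ?_
    rw [← Finset.sum_sub_distrib]
  -- counting bound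
  have hcount : ∀ i : ℤ, i ∈ I → ∑ j ∈ I, c i j ≤ 1 + 2 * m₀ ^ 2 * t := by
    intro i hi
    rw [← Finset.sum_erase_add I _ hi]
    have hstep : ∑ j ∈ I.erase i, c i j
        ≤ ∑ j ∈ I.erase i, (if j ∈ Finset.Ioo (i - (t:ℤ)) (i + (t:ℤ)) then m₀ ^ 2 else 0) := by
      apply Finset.sum_le_sum
      intro j hj
      have hji : j ≠ i := Finset.ne_of_mem_erase hj
      by_cases hmemo : j ∈ Finset.Ioo (i - (t:ℤ)) (i + (t:ℤ))
      · rw [if_pos hmemo]; exact hcov_off i j (Ne.symm hji)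
      · rw [if_neg hmemo]
        refine le_of_eq (hcov_far i j (Ne.symm hji) ?_)
        simp only [Finset.mem_Ioo, not_and_or, not_lt] at hmemo
        rcases le_total i j with h | h
        · rw [abs_of_nonneg (by omega)]; omega
        · rw [abs_of_nonpos (by omega)]; omega
    have hsum2 : ∑ j ∈ I.erase i, (if j ∈ Finset.Ioo (i - (t:ℤ)) (i + (t:ℤ)) then m₀ ^ 2 else 0)
        ≤ 2 * m₀ ^ 2 * t := by
      rw [Finset.sum_ite_mem, Finset.sum_const, nsmul_eq_mul]
      have hcard : ((I.erase i) ∩ Finset.Ioo (i - (t:ℤ)) (i + (t:ℤ))).card ≤ 2 * t := by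
        calc ((I.erase i) ∩ Finset.Ioo (i - (t:ℤ)) (i + (t:ℤ))).card
            ≤ (Finset.Ioo (i - (t:ℤ)) (i + (t:ℤ))).card :=
              Finset.card_le_card Finset.inter_subset_right
          _ ≤ 2 * t := by rw [Int.card_Ioo]; omega
      calc (((I.erase i) ∩ Finset.Ioo (i - (t:ℤ)) (i + (t:ℤ))).card : ℝ) * m₀ ^ 2
          ≤ ((2 * t : ℕ) : ℝ) * m₀ ^ 2 :=
            mul_le_mul_of_nonneg_right (by exact_mod_cast hcard) (sq_nonneg m₀)
        _ = 2 * m₀ ^ 2 * t := by push_cast; ring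
    linarith [hcov_diag i]
  have hcardI : I.card = 2 * N + 1 := by
    rw [hI_def, Int.card_Icc]; omega
  have htotal : ∑ i ∈ I, ∑ j ∈ I, c i j ≤ (2 * (N:ℝ) + 1) * (1 + 2 * m₀ ^ 2 * t) := by
    calc ∑ i ∈ I, ∑ j ∈ I, c i j ≤ ∑ _i ∈ I, (1 + 2 * m₀ ^ 2 * t) :=
        Finset.sum_le_sum hcount
      _ = (I.card : ℝ) * (1 + 2 * m₀ ^ 2 * t) := by rw [Finset.sum_const, nsmul_eq_mul]
      _ = (2 * (N:ℝ) + 1) * (1 + 2 * m₀ ^ 2 * t) := by rw [hcardI]; push_cast; ring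
  -- put it together
  have hXeq : (fun p => m0Avg N (kacPhi^[t] p)) = (2 * (N:ℝ) + 1)⁻¹ • Sf := by
    funext p
    simp only [Pi.smul_apply, smul_eq_mul, m0Avg, hSf]
    rw [div_eq_inv_mul]
    congr 1
    refine Finset.sum_congr rfl fun i _ => ?_
    have h := kacPhi_iterate_fst t p i
    have h2 := congrArg (fun z : ℤ => (z : ℝ)) h
    push_cast at h2
    rw [h2, kacSigma, kacS]
    rfl
  rw [hXeq, variance_smul]
  have hpos : (0:ℝ) < 2 * (N:ℝ) + 1 := by positivity
  calc ((2 * (N:ℝ) + 1)⁻¹) ^ 2 * variance Sf μ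
      ≤ ((2 * (N:ℝ) + 1)⁻¹) ^ 2 * ((2 * (N:ℝ) + 1) * (1 + 2 * m₀ ^ 2 * t)) := by
        apply mul_le_mul_of_nonneg_left _ (by positivity)
        rw [hvar]; exact htotal
    _ = (1 + 2 * m₀ ^ 2 * t) / (2 * (N:ℝ) + 1) := by
        field_simp
end

section
/- The time-reversal map π on {0,1}^ℤ × {0,1}^ℤ, defined by π(x,y)(i) = (x(−i), y(−i−1)), is an involution (π ∘ π = id), and it conjugates the Kac dynamics to its inverse: π ∘ φ = φ⁻¹ ∘ π. -/
/-- The inverse Kac dynamics. -/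
def kacPhiInv (p : (ℤ → ℤ) × (ℤ → ℤ)) : (ℤ → ℤ) × (ℤ → ℤ) :=
  (fun i => p.1 (i + 1) + p.2 i - 2 * p.1 (i + 1) * p.2 i, p.2)

/-- The time-reversal map `π(x,y)(i) = (x(−i), y(−i−1))`. -/
def kacRev (p : (ℤ → ℤ) × (ℤ → ℤ)) : (ℤ → ℤ) × (ℤ → ℤ) :=
  (fun i => p.1 (-i), fun i => p.2 (-i - 1))

/-- π is an involution and conjugates φ to its inverse: π∘φ = φ⁻¹∘π. -/
theorem kacRev_involution_and_conjugation :
    (kacRev ∘ kacRev = id) ∧ (kacRev ∘ kacPhi = kacPhiInv ∘ kacRev) := by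
  constructor
  · funext p
    simp only [Function.comp_apply, kacRev, id_eq]
    refine Prod.ext ?_ ?_ <;> funext i <;> simp <;> ring_nf
  · funext p
    simp only [Function.comp_apply, kacRev, kacPhi, kacPhiInv]
    refine Prod.ext ?_ ?_ <;> funext i <;> simp <;> ring_nf
end
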